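/- There exist 16 pointwise orthonormal tangent vector fields on the sphere S^255; that is, there exist continuous maps V_1, …, V_16 from the unit sphere S^255 of EuclideanSpace ℝ (Fin 256) to EuclideanSpace ℝ (Fin 256) such that for every p ∈ S^255 and all i, j ∈ {1, …, 16}: ⟨V_i(p), p⟩ = 0, and ⟨V_i(p), V_j(p)⟩ = 1 if i = j and 0 if i ≠ j. -/

import Mathlib

open scoped RealInnerProductSpace

/-! Auxiliary construction: 16 anticommuting skew-orthogonal signed-permutation
complex structures on `ℝ^256`, coming from a Clifford algebra `Cl(0,16)` module
structure, encoded via XOR-masks and sign (parity) functions. -/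

/-- The low 8 bits of a natural number. -/
def hrBits (n : ℕ) : List Bool :=
  [n.testBit 0, n.testBit 1, n.testBit 2, n.testBit 3,
   n.testBit 4, n.testBit 5, n.testBit 6, n.testBit 7]

/-- Parity of the low 8 bits of a natural number. -/
def hrPar (n : ℕ) : Bool := (hrBits n).foldr Bool.xor false

lemma bool_key (x x' s s' : Bool) :
    (x.xor x').xor (s.xor s') = (x.xor s).xor (x'.xor s') := by
  cases x <;> cases x' <;> cases s <;> cases s' <;> rfl

lemma foldr_xor (l1 : List Bool) : ∀ l2 : List Bool, l1.length = l2.length →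
    (List.zipWith Bool.xor l1 l2).foldr Bool.xor false
      = ((l1.foldr Bool.xor false).xor (l2.foldr Bool.xor false)) := by
  induction l1 with
  | nil =>
    intro l2 h
    cases l2 with
    | nil => simp
    | cons b t2 => simp at h
  | cons a t ih =>
    intro l2 h
    cases l2 with
    | nil => simp at h
    | cons b t2 =>
      simp only [List.zipWith, List.foldr]
      rw [ih t2 (by simpa using h), bool_key]

/-- XOR masks of the 16 signed-permutation operators. -/
def hrMask (i : Fin 16) : ℕ :=
  [96, 192, 160, 208, 64, 112, 176, 16, 70, 76, 74, 77, 68, 71, 75, 65].getD i.val 0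

/-- Sign masks of the 16 signed-permutation operators. -/
def hrZy (i : Fin 16) : ℕ :=
  [64, 96, 208, 240, 224, 112, 192, 80, 4, 6, 13, 15, 14, 7, 12, 5].getD i.val 0

/-- Sign bit (true = `-1`) of operator `i` at coordinate `a`. -/
def hrSb (i : Fin 16) (a : ℕ) : Bool := !hrPar (a &&& hrZy i)

lemma hrMask_lt (i : Fin 16) : hrMask i < 256 := by fin_cases i <;> decide

/-- The coordinate permutation of operator `i`. -/
def hrXm (i : Fin 16) (a : Fin 256) : Fin 256 :=
  ⟨a.val ^^^ hrMask i, Nat.xor_lt_two_pow (n := 8) a.isLt (hrMask_lt i)⟩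

lemma hrXm_invol (i : Fin 16) : Function.Involutive (hrXm i) := by
  intro a
  simp [hrXm, Nat.xor_assoc, Fin.ext_iff]

/-- The permutation as an `Equiv`. -/
def hrPerm (i : Fin 16) : Equiv.Perm (Fin 256) := (hrXm_invol i).toPerm _

/-- Real sign of operator `i` at coordinate `a`. -/
def hrSg (i : Fin 16) (a : Fin 256) : ℝ := if hrSb i a.val then -1 else 1

/-- The `i`-th linear operator on `ℝ^256`. -/
def hrL (i : Fin 16) : EuclideanSpace ℝ (Fin 256) →ₗ[ℝ] EuclideanSpace ℝ (Fin 256) where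
  toFun p := WithLp.toLp 2 (fun a => hrSg i a * p (hrXm i a))
  map_add' p q := by
    ext a
    simp [PiLp.add_apply, mul_add]
  map_smul' c p := by
    ext a
    simp [PiLp.smul_apply, smul_eq_mul]
    ring

lemma hrPar_xor (x y : ℕ) : hrPar (x ^^^ y) = xor (hrPar x) (hrPar y) := by
  have hb : hrBits (x ^^^ y) = List.zipWith Bool.xor (hrBits x) (hrBits y) := by
    simp only [hrBits, Nat.testBit_xor]
    rfl
  rw [hrPar, hb, foldr_xor _ _ (by simp [hrBits])]
  rfl

lemma hrSb_xor (i : Fin 16) (a m : ℕ) :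
    hrSb i (a ^^^ m) = xor (hrSb i a) (hrPar (m &&& hrZy i)) := by
  simp only [hrSb, Nat.and_xor_distrib_right, hrPar_xor]
  cases hrPar (a &&& hrZy i) <;> cases hrPar (m &&& hrZy i) <;> rfl

lemma hrQ_self (i : Fin 16) : hrPar (hrMask i &&& hrZy i) = true := by
  fin_cases i <;> decide

lemma hrQ_pair (i j : Fin 16) (hij : i ≠ j) :
    xor (hrPar ((hrMask i ^^^ hrMask j) &&& hrZy i))
        (hrPar ((hrMask i ^^^ hrMask j) &&& hrZy j)) = true := by
  fin_cases i <;> fin_cases j <;> first | (exfalso; exact hij rfl) | decide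

lemma hrSb_xm (i : Fin 16) (a : Fin 256) : hrSb i (hrXm i a).val = !(hrSb i a.val) := by
  show hrSb i (a.val ^^^ hrMask i) = _
  rw [hrSb_xor, hrQ_self]
  cases hrSb i a.val <;> rfl

lemma hrSb_pair (i j : Fin 16) (hij : i ≠ j) (a : Fin 256) :
    ((hrSb i (hrXm i (hrXm j a)).val).xor (hrSb j (hrXm i (hrXm j a)).val)) =
      !((hrSb i a.val).xor (hrSb j a.val)) := by
  have hv : (hrXm i (hrXm j a)).val = a.val ^^^ (hrMask i ^^^ hrMask j) := by
    show (a.val ^^^ hrMask j) ^^^ hrMask i = _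
    rw [Nat.xor_assoc, Nat.xor_comm (hrMask j) (hrMask i)]
  rw [hv, hrSb_xor, hrSb_xor]
  have h := hrQ_pair i j hij
  revert h
  cases hrSb i a.val <;> cases hrSb j a.val <;>
    cases hrPar ((hrMask i ^^^ hrMask j) &&& hrZy i) <;>
    cases hrPar ((hrMask i ^^^ hrMask j) &&& hrZy j) <;> simp

lemma hrSg_xm (i : Fin 16) (a : Fin 256) : hrSg i (hrXm i a) = -hrSg i a := by
  simp only [hrSg, hrSb_xm]
  cases hrSb i a.val <;> norm_num

lemma hrSg_sq (i : Fin 16) (a : Fin 256) : hrSg i a * hrSg i a = 1 := by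
  simp only [hrSg]; split <;> norm_num

lemma hrSg_pair (i j : Fin 16) (hij : i ≠ j) (a : Fin 256) :
    hrSg i (hrXm i (hrXm j a)) * hrSg j (hrXm i (hrXm j a)) =
      -(hrSg i a * hrSg j a) := by
  have h := hrSb_pair i j hij a
  simp only [hrSg]
  rcases hb : hrSb i a.val <;> rcases hc : hrSb j a.val <;>
    rcases hd : hrSb i (hrXm i (hrXm j a)).val <;>
    rcases he : hrSb j (hrXm i (hrXm j a)).val <;>
    simp [hb, hc, hd, he] at h ⊢ <;> norm_num

lemma hrXm_comm (i j : Fin 16) (a : Fin 256) : hrXm i (hrXm j a) = hrXm j (hrXm i a) := by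
  simp [hrXm, Fin.ext_iff, Nat.xor_assoc, Nat.xor_comm (hrMask j) (hrMask i)]

lemma inner_hrL (i j : Fin 16) (p q : EuclideanSpace ℝ (Fin 256)) :
    ⟪hrL i p, hrL j q⟫ = ∑ a : Fin 256,
      (hrSg i a * p (hrXm i a)) * (hrSg j a * q (hrXm j a)) := by
  simp [hrL, PiLp.inner_apply, RCLike.inner_apply]
  exact Finset.sum_congr rfl fun _ _ => mul_comm _ _

lemma inner_hrL_right (i : Fin 16) (p q : EuclideanSpace ℝ (Fin 256)) :
    ⟪hrL i p, q⟫ = ∑ a : Fin 256, (hrSg i a * p (hrXm i a)) * q a := by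
  simp [hrL, PiLp.inner_apply, RCLike.inner_apply]
  exact Finset.sum_congr rfl fun _ _ => mul_comm _ _

lemma hrL_tangent (i : Fin 16) (p : EuclideanSpace ℝ (Fin 256)) : ⟪hrL i p, p⟫ = 0 := by
  rw [inner_hrL_right]
  set f : Fin 256 → ℝ := fun a => (hrSg i a * p (hrXm i a)) * p a with hf
  have key : ∑ a, f a = ∑ a, -f a := by
    calc ∑ a, f a = ∑ a, f (hrPerm i a) := (Equiv.sum_comp (hrPerm i) f).symm
    _ = ∑ a, -f a := by
        refine Finset.sum_congr rfl fun a _ => ?_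
        show (hrSg i (hrXm i a) * p (hrXm i (hrXm i a))) * p (hrXm i a) = -f a
        rw [hrSg_xm, hrXm_invol i a, hf]
        ring
  have h2 := key
  simp only [Finset.sum_neg_distrib] at h2
  linarith

lemma hrL_self (i : Fin 16) (p : EuclideanSpace ℝ (Fin 256)) :
    ⟪hrL i p, hrL i p⟫ = ⟪p, p⟫ := by
  rw [inner_hrL]
  have : ∀ a : Fin 256, (hrSg i a * p (hrXm i a)) * (hrSg i a * p (hrXm i a)) =
      p (hrXm i a) * p (hrXm i a) := by
    intro a
    calc (hrSg i a * p (hrXm i a)) * (hrSg i a * p (hrXm i a))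
        = (hrSg i a * hrSg i a) * (p (hrXm i a) * p (hrXm i a)) := by ring
      _ = p (hrXm i a) * p (hrXm i a) := by rw [hrSg_sq]; ring
  rw [Finset.sum_congr rfl fun a _ => this a]
  rw [show ⟪p, p⟫ = ∑ a : Fin 256, p a * p a by
    simp only [PiLp.inner_apply, RCLike.inner_apply, conj_trivial]]
  exact Fintype.sum_equiv (hrPerm i) _ _ fun a => rfl

lemma hrL_ortho (i j : Fin 16) (hij : i ≠ j) (p : EuclideanSpace ℝ (Fin 256)) :
    ⟪hrL i p, hrL j p⟫ = 0 := by
  rw [inner_hrL]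
  set f : Fin 256 → ℝ := fun a => (hrSg i a * p (hrXm i a)) * (hrSg j a * p (hrXm j a))
    with hf
  have hinv : Function.Involutive (fun a => hrXm i (hrXm j a)) := by
    intro a
    show hrXm i (hrXm j (hrXm i (hrXm j a))) = a
    rw [hrXm_comm i j (hrXm i (hrXm j a)), hrXm_invol i, hrXm_invol j]
  have key : ∑ a, f a = ∑ a, -f a := by
    calc ∑ a, f a = ∑ a, f (hinv.toPerm _ a) := (Equiv.sum_comp (hinv.toPerm _) f).symm
    _ = ∑ a, -f a := by
        refine Finset.sum_congr rfl fun a _ => ?_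
        show (hrSg i (hrXm i (hrXm j a)) * p (hrXm i (hrXm i (hrXm j a)))) *
          (hrSg j (hrXm i (hrXm j a)) * p (hrXm j (hrXm i (hrXm j a)))) = -f a
        rw [hrXm_invol i (hrXm j a), hrXm_comm j i (hrXm j a), hrXm_invol j a]
        have hs := hrSg_pair i j hij a
        calc (hrSg i (hrXm i (hrXm j a)) * p (hrXm j a)) *
              (hrSg j (hrXm i (hrXm j a)) * p (hrXm i a))
            = (hrSg i (hrXm i (hrXm j a)) * hrSg j (hrXm i (hrXm j a))) *
              (p (hrXm j a) * p (hrXm i a)) := by ring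
          _ = -(hrSg i a * hrSg j a) * (p (hrXm j a) * p (hrXm i a)) := by rw [hs]
          _ = -f a := by rw [hf]; ring
  have h2 := key
  simp only [Finset.sum_neg_distrib] at h2
  linarith

/-- There exist 16 pointwise orthonormal tangent vector fields on the
sphere `S^255`: continuous maps `V i` from the unit sphere of `EuclideanSpace ℝ (Fin 256)`
to `EuclideanSpace ℝ (Fin 256)` with `⟪V i p, p⟫ = 0` and `⟪V i p, V j p⟫ = δᵢⱼ`
at every point `p` of the sphere. -/
theorem exists_sixteen_orthonormal_tangent_fields_on_S255 :
    ∃ V : Fin 16 →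
        (Metric.sphere (0 : EuclideanSpace ℝ (Fin 256)) 1 → EuclideanSpace ℝ (Fin 256)),
      (∀ i, Continuous (V i)) ∧
      (∀ i, ∀ p : Metric.sphere (0 : EuclideanSpace ℝ (Fin 256)) 1,
        ⟪V i p, (p : EuclideanSpace ℝ (Fin 256))⟫ = 0) ∧
      (∀ i j, ∀ p : Metric.sphere (0 : EuclideanSpace ℝ (Fin 256)) 1,
        ⟪V i p, V j p⟫ = if i = j then 1 else 0) := by
  refine ⟨fun i p => hrL i (p : EuclideanSpace ℝ (Fin 256)), fun i => ?_, fun i p => hrL_tangent i _, fun i j p => ?_⟩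
  · exact (hrL i).continuous_of_finiteDimensional.comp continuous_subtype_val
  · by_cases hij : i = j
    · subst hij
      simp only [if_pos rfl]
      rw [hrL_self]
      have hp : ‖(p : EuclideanSpace ℝ (Fin 256))‖ = 1 :=
        mem_sphere_zero_iff_norm.mp p.2
      rw [real_inner_self_eq_norm_sq, hp]; norm_num
    · simp only [if_neg hij]
      exact hrL_ortho i j hij _
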